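/- Let j ≥ 1 and let λ be the symmetric bilinear form on H = (ℤ/2^j)² with values in ℚ/ℤ given with respect to the standard basis by the matrix (1/2^j)·[[2m, 1],[1, 2n]] for integers m, n. If at least one of m, n is even, then (H, λ) is isomorphic (as a linked group) to the form with matrix (1/2^j)·[[0,1],[1,0]]; if both m and n are odd, then (H, λ) is isomorphic to the form with matrix (1/2^j)·[[2,1],[1,2]]. -/

import Mathlib

section stmt11aux

lemma stmt11_coe_zsmul (z : ℤ) (r : ℚ) :
    z • ((r : ℚ) : AddCircle (1:ℚ)) = ((z * r : ℚ) : AddCircle (1:ℚ)) := by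
  rw [← zsmul_eq_mul]
  exact (map_zsmul (QuotientAddGroup.mk' (AddSubgroup.zmultiples (1:ℚ))) z r).symm

lemma stmt11_coe_int_zero (z : ℤ) : (((z : ℚ)) : AddCircle (1:ℚ)) = 0 := by
  rw [AddCircle.coe_eq_zero_iff]
  exact ⟨z, by simp⟩

lemma stmt11_coe_add (r s : ℚ) :
    ((r + s : ℚ) : AddCircle (1:ℚ)) = (r : AddCircle (1:ℚ)) + s := rfl

lemma stmt11_coe_div_eq_of_dvd (j : ℕ) (N N' : ℤ) (h : (2^j : ℤ) ∣ N - N') :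
    (((N : ℚ) / 2^j : ℚ) : AddCircle (1:ℚ)) = (((N' : ℚ) / 2^j : ℚ) : AddCircle (1:ℚ)) := by
  obtain ⟨z, hz⟩ := h
  have hN : N = N' + 2^j * z := by linarith
  have h2 : (2:ℚ)^j ≠ 0 := by positivity
  have : ((N:ℚ) / 2^j : ℚ) = (N':ℚ) / 2^j + z := by
    rw [hN]; push_cast; field_simp
  rw [this, stmt11_coe_add, stmt11_coe_int_zero, add_zero]

lemma stmt11_hensel (c d e : ℤ) (hd : Odd d) (he : Even e) :
    ∀ k : ℕ, ∃ a b : ℤ, a^2*c + a*d + e = 2^k * b := by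
  have main : ∀ k : ℕ, ∃ a : ℤ, (2:ℤ)^k ∣ a^2*c + a*d + e := by
    intro k
    induction k with
    | zero => exact ⟨0, one_dvd _⟩
    | succ k ih =>
      match k, ih with
      | 0, _ =>
        refine ⟨0, ?_⟩
        simpa using he.two_dvd
      | k+1, ih =>
        obtain ⟨a, b, hb⟩ := ih
        obtain ⟨d', hd'⟩ := hd
        refine ⟨a + 2^(k+1) * b, ⟨b*(1 + a*c + d') + 2^k * (b^2*c), ?_⟩⟩
        have : ((2:ℤ)^(k+1))^2 = 2^(k+1+1) * 2^k := by ring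
        linear_combination hb + (2:ℤ)^(k+1)*b*hd' + (b^2*c) * this
  intro k
  obtain ⟨a, b, hb⟩ := main k
  exact ⟨a, b, hb⟩

lemma stmt11_inv_mod (u : ℤ) (hu : Odd u) (k : ℕ) (r : ℤ) :
    ∃ s z : ℤ, s*u - r = 2^k * z := by
  obtain ⟨b, hb⟩ := hu
  have hcop : IsCoprime u ((2:ℤ)^k) :=
    (show IsCoprime u 2 from ⟨1, -b, by linarith⟩).pow_right
  obtain ⟨c, d, hcd⟩ := hcop
  exact ⟨c*r, -(d*r), by linear_combination r * hcd⟩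

lemma stmt11_odd_cancel (u x : ℤ) (hu : Odd u) (k : ℕ) (h : (2^k:ℤ) ∣ u * x) :
    (2^k:ℤ) ∣ x := by
  obtain ⟨b, hb⟩ := hu
  have hcop : IsCoprime ((2:ℤ)^k) u :=
    ((show IsCoprime u 2 from ⟨1, -b, by linarith⟩).pow_right).symm
  exact hcop.dvd_of_dvd_mul_left h

lemma stmt11_bij_comp (q : ℕ) (x y : ZMod q × ZMod q)
    (hbij : Function.Bijective fun ab : ZMod q × ZMod q => ab.1 • x + ab.2 • y)
    (P Q R S U : ZMod q) (hdet : (P*S - Q*R) * U = 1) :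
    Function.Bijective
      (fun ab : ZMod q × ZMod q => ab.1 • (P•x + Q•y) + ab.2 • (R•x + S•y)) := by
  have hM : Function.Bijective
      (fun ab : ZMod q × ZMod q => (ab.1*P + ab.2*R, ab.1*Q + ab.2*S)) := by
    rw [Function.bijective_iff_has_inverse]
    refine ⟨fun cd => (U*(S*cd.1 - R*cd.2), U*(P*cd.2 - Q*cd.1)), fun ab => ?_, fun cd => ?_⟩
    · ext
      · show U*(S*(ab.1*P + ab.2*R) - R*(ab.1*Q + ab.2*S)) = ab.1
        linear_combination ab.1 * hdet
      · show U*(P*(ab.1*Q + ab.2*S) - Q*(ab.1*P + ab.2*R)) = ab.2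
        linear_combination ab.2 * hdet
    · ext
      · show U*(S*cd.1 - R*cd.2)*P + U*(P*cd.2 - Q*cd.1)*R = cd.1
        linear_combination cd.1 * hdet
      · show U*(S*cd.1 - R*cd.2)*Q + U*(P*cd.2 - Q*cd.1)*S = cd.2
        linear_combination cd.2 * hdet
  have heq : (fun ab : ZMod q × ZMod q => ab.1 • (P•x + Q•y) + ab.2 • (R•x + S•y))
      = (fun ab : ZMod q × ZMod q => ab.1 • x + ab.2 • y) ∘
        (fun ab : ZMod q × ZMod q => (ab.1*P + ab.2*R, ab.1*Q + ab.2*S)) := by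
    funext ab
    simp only [Function.comp_apply, smul_add, smul_smul, add_smul]
    abel
  rw [heq]
  exact hbij.comp hM

variable {A : Type} [AddCommGroup A]

lemma stmt11_combo (j : ℕ) (m n : ℤ) (l : A →+ A →+ AddCircle (1:ℚ)) (x y : A)
    (hyx : l y x = l x y)
    (hxx : l x x = ((2 * (m : ℚ) / 2 ^ j : ℚ) : AddCircle (1 : ℚ)))
    (hxy : l x y = ((1 / 2 ^ j : ℚ) : AddCircle (1 : ℚ)))
    (hyy : l y y = ((2 * (n : ℚ) / 2 ^ j : ℚ) : AddCircle (1 : ℚ)))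
    (α β γ δ : ℤ) :
    l (α•x + β•y) (γ•x + δ•y)
      = ((((α*γ*(2*m) + (α*δ + β*γ) + β*δ*(2*n) : ℤ) : ℚ) / 2^j : ℚ) : AddCircle (1:ℚ)) := by
  have hsa : ∀ (z : ℤ) (f : A →+ AddCircle (1:ℚ)) (a : A), (z • f) a = z • f a :=
    fun _ _ _ => rfl
  simp only [map_add, AddMonoidHom.add_apply, map_zsmul, hsa]
  rw [hyx, hxx, hxy, hyy]
  rw [smul_add, smul_add]
  rw [smul_comm (γ:ℤ) (α:ℤ), smul_comm (δ:ℤ) (α:ℤ), smul_comm (γ:ℤ) (β:ℤ), smul_comm (δ:ℤ) (β:ℤ)]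
  rw [smul_smul, smul_smul, smul_smul, smul_smul]
  rw [stmt11_coe_zsmul, stmt11_coe_zsmul, stmt11_coe_zsmul, stmt11_coe_zsmul,
    ← stmt11_coe_add, ← stmt11_coe_add, ← stmt11_coe_add]
  congr 1
  push_cast
  field_simp
  ring

end stmt11aux

section stmt11main

lemma stmt11_aux_even (k : ℕ) (m n : ℤ)
    (l : (ZMod (2^(k+1)) × ZMod (2^(k+1))) →+ (ZMod (2^(k+1)) × ZMod (2^(k+1))) →+
      AddCircle (1:ℚ))
    (x y : ZMod (2^(k+1)) × ZMod (2^(k+1)))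
    (hbij : Function.Bijective fun ab : ZMod (2^(k+1)) × ZMod (2^(k+1)) =>
      ab.1 • x + ab.2 • y)
    (hyx : l y x = l x y)
    (hxx : l x x = ((2 * (m:ℚ) / 2^(k+1) : ℚ) : AddCircle (1:ℚ)))
    (hxy : l x y = ((1 / 2^(k+1) : ℚ) : AddCircle (1:ℚ)))
    (hyy : l y y = ((2 * (n:ℚ) / 2^(k+1) : ℚ) : AddCircle (1:ℚ)))
    (hm : Even m) :
    ∃ v w : ZMod (2^(k+1)) × ZMod (2^(k+1)),
      (Function.Bijective fun ab : ZMod (2^(k+1)) × ZMod (2^(k+1)) =>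
        ab.1 • v + ab.2 • w) ∧
      l v v = 0 ∧ l v w = ((1 / 2^(k+1) : ℚ) : AddCircle (1:ℚ)) ∧ l w w = 0 := by
  obtain ⟨a, b, hA⟩ := stmt11_hensel n 1 m odd_one hm k
  obtain ⟨s, z, hs⟩ := stmt11_inv_mod (2*a*n+1) ⟨a*n, by ring⟩ (k+1) 1
  obtain ⟨t, ht⟩ : ∃ t : ℤ, t = -(s^2*n) := ⟨_, rfl⟩
  haveI : NeZero ((2:ℕ)^(k+1)) := ⟨by positivity⟩
  have hdet : ((((1:ℤ) : ZMod (2^(k+1))) * ((t*a+s:ℤ) : ZMod (2^(k+1)))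
      - ((a:ℤ) : ZMod (2^(k+1))) * ((t:ℤ) : ZMod (2^(k+1))))
      * ((2*a*n+1:ℤ) : ZMod (2^(k+1)))) = 1 := by
    have h0 : ((s*(2*a*n+1) - 1 : ℤ) : ZMod (2^(k+1))) = 0 := by
      rw [ZMod.intCast_zmod_eq_zero_iff_dvd]
      exact ⟨z, by push_cast; linear_combination hs⟩
    push_cast at h0 ⊢
    linear_combination h0
  refine ⟨((1:ℤ) : ZMod (2^(k+1)))•x + ((a:ℤ) : ZMod (2^(k+1)))•y,
      ((t:ℤ) : ZMod (2^(k+1)))•x + ((t*a+s:ℤ) : ZMod (2^(k+1)))•y,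
      stmt11_bij_comp _ x y hbij _ _ _ _ _ hdet, ?_, ?_, ?_⟩
  all_goals
    simp only [Int.cast_smul_eq_zsmul]
  · rw [stmt11_combo (k+1) m n l x y hyx hxx hxy hyy 1 a 1 a]
    have hd : ((2:ℤ)^(k+1)) ∣ (1*1*(2*m) + (1*a + a*1) + a*a*(2*n)) - 0 :=
      ⟨b, by linear_combination 2 * hA⟩
    rw [stmt11_coe_div_eq_of_dvd (k+1) _ 0 hd]
    norm_num
  · rw [stmt11_combo (k+1) m n l x y hyx hxx hxy hyy 1 a t (t*a+s)]
    have hd : ((2:ℤ)^(k+1)) ∣ (1*t*(2*m) + (1*(t*a+s) + a*t) + a*(t*a+s)*(2*n)) - 1 :=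
      ⟨z + t*b, by linear_combination hs + 2*t*hA⟩
    rw [stmt11_coe_div_eq_of_dvd (k+1) _ 1 hd]
    norm_num
  · rw [stmt11_combo (k+1) m n l x y hyx hxx hxy hyy t (t*a+s) t (t*a+s)]
    have hd : ((2:ℤ)^(k+1)) ∣ (t*t*(2*m) + (t*(t*a+s) + (t*a+s)*t) + (t*a+s)*(t*a+s)*(2*n)) - 0 :=
      ⟨t^2*b + 2*t*z, by linear_combination 2*t^2*hA + 2*t*hs + 2*ht⟩
    rw [stmt11_coe_div_eq_of_dvd (k+1) _ 0 hd]
    norm_num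

lemma stmt11_aux_odd (k : ℕ) (m n : ℤ)
    (l : (ZMod (2^(k+1)) × ZMod (2^(k+1))) →+ (ZMod (2^(k+1)) × ZMod (2^(k+1))) →+
      AddCircle (1:ℚ))
    (x y : ZMod (2^(k+1)) × ZMod (2^(k+1)))
    (hbij : Function.Bijective fun ab : ZMod (2^(k+1)) × ZMod (2^(k+1)) =>
      ab.1 • x + ab.2 • y)
    (hyx : l y x = l x y)
    (hxx : l x x = ((2 * (m:ℚ) / 2^(k+1) : ℚ) : AddCircle (1:ℚ)))
    (hxy : l x y = ((1 / 2^(k+1) : ℚ) : AddCircle (1:ℚ)))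
    (hyy : l y y = ((2 * (n:ℚ) / 2^(k+1) : ℚ) : AddCircle (1:ℚ)))
    (hm : Odd m) (hn : Odd n) :
    ∃ v w : ZMod (2^(k+1)) × ZMod (2^(k+1)),
      (Function.Bijective fun ab : ZMod (2^(k+1)) × ZMod (2^(k+1)) =>
        ab.1 • v + ab.2 • w) ∧
      l v v = ((2 / 2^(k+1) : ℚ) : AddCircle (1:ℚ)) ∧
      l v w = ((1 / 2^(k+1) : ℚ) : AddCircle (1:ℚ)) ∧
      l w w = ((2 / 2^(k+1) : ℚ) : AddCircle (1:ℚ)) := by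
  obtain ⟨m', hm'⟩ := hm
  obtain ⟨n', hn'⟩ := hn
  obtain ⟨a, b, hA⟩ := stmt11_hensel n 1 (m-1) odd_one ⟨m', by omega⟩ k
  obtain ⟨t, c, hT⟩ := stmt11_hensel (4*n - (2*a*n+1)^2) ((2*a*n+1)^2 - 4*n)
      (n - (2*a*n+1)^2)
      ⟨2*a^2*n^2 + 2*a*n - 2*n, by ring⟩ ⟨n' - 2*a^2*n^2 - 2*a*n, by rw [hn']; ring⟩ k
  obtain ⟨s, z, hs⟩ := stmt11_inv_mod (2*a*n+1) ⟨a*n, by ring⟩ (k+1) (1-2*t)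
  have hsodd : Odd s := by
    have hmul : s * (2*a*n+1) = 2*(-t + 2^k*z) + 1 := by linear_combination hs
    exact (Int.odd_mul.mp ⟨_, hmul⟩).1
  obtain ⟨σ, ζ, hσ⟩ := stmt11_inv_mod s hsodd (k+1) 1
  have hX : (2:ℤ)^k ∣ (2*a*n+1)^2 * (s^2*n + t - t^2 - 1) :=
    ⟨c + 4*n*(1-2*t)*z + 2^(k+2)*n*z^2, by
      linear_combination hT + n*(s*(2*a*n+1) + (1-2*t) + 2^(k+1)*z)*hs⟩
  obtain ⟨d, hd⟩ := stmt11_odd_cancel _ _ ⟨2*a^2*n^2 + 2*a*n, by ring⟩ k hX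
  haveI : NeZero ((2:ℕ)^(k+1)) := ⟨by positivity⟩
  have hdet : ((((1:ℤ) : ZMod (2^(k+1))) * ((t*a+s:ℤ) : ZMod (2^(k+1)))
      - ((a:ℤ) : ZMod (2^(k+1))) * ((t:ℤ) : ZMod (2^(k+1))))
      * ((σ:ℤ) : ZMod (2^(k+1)))) = 1 := by
    have h0 : ((σ*s - 1 : ℤ) : ZMod (2^(k+1))) = 0 := by
      rw [ZMod.intCast_zmod_eq_zero_iff_dvd]
      exact ⟨ζ, by push_cast; linear_combination hσ⟩
    push_cast at h0 ⊢
    linear_combination h0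
  refine ⟨((1:ℤ) : ZMod (2^(k+1)))•x + ((a:ℤ) : ZMod (2^(k+1)))•y,
      ((t:ℤ) : ZMod (2^(k+1)))•x + ((t*a+s:ℤ) : ZMod (2^(k+1)))•y,
      stmt11_bij_comp _ x y hbij _ _ _ _ _ hdet, ?_, ?_, ?_⟩
  all_goals
    simp only [Int.cast_smul_eq_zsmul]
  · rw [stmt11_combo (k+1) m n l x y hyx hxx hxy hyy 1 a 1 a]
    have hdvd : ((2:ℤ)^(k+1)) ∣ (1*1*(2*m) + (1*a + a*1) + a*a*(2*n)) - 2 :=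
      ⟨b, by linear_combination 2 * hA⟩
    rw [stmt11_coe_div_eq_of_dvd (k+1) _ 2 hdvd]
    norm_num
  · rw [stmt11_combo (k+1) m n l x y hyx hxx hxy hyy 1 a t (t*a+s)]
    have hdvd : ((2:ℤ)^(k+1)) ∣ (1*t*(2*m) + (1*(t*a+s) + a*t) + a*(t*a+s)*(2*n)) - 1 :=
      ⟨z + t*b, by linear_combination hs + 2*t*hA⟩
    rw [stmt11_coe_div_eq_of_dvd (k+1) _ 1 hdvd]
    norm_num
  · rw [stmt11_combo (k+1) m n l x y hyx hxx hxy hyy t (t*a+s) t (t*a+s)]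
    have hdvd : ((2:ℤ)^(k+1)) ∣
        (t*t*(2*m) + (t*(t*a+s) + (t*a+s)*t) + (t*a+s)*(t*a+s)*(2*n)) - 2 :=
      ⟨t^2*b + 2*t*z + d, by linear_combination 2*t^2*hA + 2*t*hs + 2*hd⟩
    rw [stmt11_coe_div_eq_of_dvd (k+1) _ 2 hdvd]
    norm_num

end stmt11main


/-- Let `j ≥ 1` and let `l` be the linking form on `H = (ℤ/2^j)²` whose
matrix with respect to the standard basis `e₁ = (1,0)`, `e₂ = (0,1)` is
`(1/2^j)·[[2m, 1], [1, 2n]]`.  If at least one of `m, n` is even, then `(H, l)` is isomorphic to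
the form with matrix `(1/2^j)·[[0,1],[1,0]]`; if both are odd, it is isomorphic to the form with
matrix `(1/2^j)·[[2,1],[1,2]]`.  The isomorphism is expressed by the existence of a new basis
`(v, w)` of `H` on which `l` takes the prescribed values. -/
theorem stmt_11 (j : ℕ) (hj : 1 ≤ j) (m n : ℤ)
    (l : (ZMod (2 ^ j) × ZMod (2 ^ j)) →+ (ZMod (2 ^ j) × ZMod (2 ^ j)) →+ AddCircle (1 : ℚ))
    (hsymm : ∀ x y, l x y = l y x)
    (h11 : l (1, 0) (1, 0) = ((2 * (m : ℚ) / 2 ^ j : ℚ) : AddCircle (1 : ℚ)))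
    (h12 : l (1, 0) (0, 1) = ((1 / 2 ^ j : ℚ) : AddCircle (1 : ℚ)))
    (h22 : l (0, 1) (0, 1) = ((2 * (n : ℚ) / 2 ^ j : ℚ) : AddCircle (1 : ℚ))) :
    ((Even m ∨ Even n) →
      ∃ v w : ZMod (2 ^ j) × ZMod (2 ^ j),
        (Function.Bijective fun ab : ZMod (2 ^ j) × ZMod (2 ^ j) => ab.1 • v + ab.2 • w) ∧
        l v v = 0 ∧ l v w = ((1 / 2 ^ j : ℚ) : AddCircle (1 : ℚ)) ∧ l w w = 0) ∧
    ((Odd m ∧ Odd n) →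
      ∃ v w : ZMod (2 ^ j) × ZMod (2 ^ j),
        (Function.Bijective fun ab : ZMod (2 ^ j) × ZMod (2 ^ j) => ab.1 • v + ab.2 • w) ∧
        l v v = ((2 / 2 ^ j : ℚ) : AddCircle (1 : ℚ)) ∧
        l v w = ((1 / 2 ^ j : ℚ) : AddCircle (1 : ℚ)) ∧
        l w w = ((2 / 2 ^ j : ℚ) : AddCircle (1 : ℚ))) := by
  obtain ⟨k, rfl⟩ : ∃ k, j = k + 1 := ⟨j - 1, by omega⟩
  have hb1 : Function.Bijective fun ab : ZMod (2^(k+1)) × ZMod (2^(k+1)) =>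
      ab.1 • ((1,0) : ZMod (2^(k+1)) × ZMod (2^(k+1))) + ab.2 • ((0,1) : _ × _) := by
    have heq : (fun ab : ZMod (2^(k+1)) × ZMod (2^(k+1)) =>
        ab.1 • ((1,0) : ZMod (2^(k+1)) × ZMod (2^(k+1))) + ab.2 • ((0,1) : _ × _)) = id := by
      funext ab
      ext <;> simp [Prod.fst_add, Prod.snd_add, smul_eq_mul]
    rw [heq]
    exact Function.bijective_id
  have hb2 : Function.Bijective fun ab : ZMod (2^(k+1)) × ZMod (2^(k+1)) =>
      ab.1 • ((0,1) : ZMod (2^(k+1)) × ZMod (2^(k+1))) + ab.2 • ((1,0) : _ × _) := by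
    have heq : (fun ab : ZMod (2^(k+1)) × ZMod (2^(k+1)) =>
        ab.1 • ((0,1) : ZMod (2^(k+1)) × ZMod (2^(k+1))) + ab.2 • ((1,0) : _ × _))
        = Prod.swap := by
      funext ab
      ext <;> simp [Prod.fst_add, Prod.snd_add, smul_eq_mul]
    rw [heq]
    exact Prod.swap_bijective
  constructor
  · rintro (hme | hne)
    · exact stmt11_aux_even k m n l (1,0) (0,1) hb1 (hsymm (0,1) (1,0)) h11 h12 h22 hme
    · exact stmt11_aux_even k n m l (0,1) (1,0) hb2 (hsymm (1,0) (0,1)) h22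
        ((hsymm (0,1) (1,0)).trans h12) h11 hne
  · rintro ⟨hmo, hno⟩
    exact stmt11_aux_odd k m n l (1,0) (0,1) hb1 (hsymm (0,1) (1,0)) h11 h12 h22 hmo hno
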